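/- Let f : 2^N → ℝ be a submodular function, let A, B ⊆ N, and let A(p) and B(q) be independently sampled random subsets of A and B respectively, where each element of A appears in A(p) with probability p independently and each element of B appears in B(q) with probability q independently. Then E[f(A(p) ∪ B(q))] ≥ (1-p)(1-q)·f(∅) + p(1-q)·f(A) + (1-p)q·f(B) + pq·f(A ∪ B). -/

import Mathlib

lemma key_sampling {α : Type*} [DecidableEq α] :
    ∀ (A : Finset α) (f : Finset α → ℝ),
      (∀ S T : Finset α, f (S ∪ T) + f (S ∩ T) ≤ f S + f T) →
      ∀ p : ℝ, 0 ≤ p → p ≤ 1 →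
      (1 - p) * f ∅ + p * f A ≤
        ∑ S ∈ A.powerset, p ^ S.card * (1 - p) ^ (A.card - S.card) * f S := by
  intro A
  induction A using Finset.induction_on with
  | empty => intro f _ p _ _; simp; ring_nf; simp
  | @insert x A hx ih =>
    intro f hsub p hp0 hp1
    rw [Finset.sum_powerset_insert hx]
    have hcard : A.card + 1 = (insert x A).card := by
      rw [Finset.card_insert_of_notMem hx]
    have h1 : ∀ t ∈ A.powerset,
        p ^ t.card * (1 - p) ^ ((insert x A).card - t.card) * f t
        = (1 - p) * (p ^ t.card * (1 - p) ^ (A.card - t.card) * f t) := by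
      intro t ht
      have htc : t.card ≤ A.card := Finset.card_le_card (Finset.mem_powerset.mp ht)
      rw [← hcard]
      have : A.card + 1 - t.card = (A.card - t.card) + 1 := by omega
      rw [this, pow_succ]
      ring
    have h2 : ∀ t ∈ A.powerset,
        p ^ (insert x t).card * (1 - p) ^ ((insert x A).card - (insert x t).card) * f (insert x t)
        = p * (p ^ t.card * (1 - p) ^ (A.card - t.card) * f (insert x t)) := by
      intro t ht
      have htA := Finset.mem_powerset.mp ht
      have hxt : x ∉ t := fun h => hx (htA h)
      rw [Finset.card_insert_of_notMem hxt, ← hcard]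
      have : A.card + 1 - (t.card + 1) = A.card - t.card := by omega
      rw [this, pow_succ]
      ring
    rw [Finset.sum_congr rfl h1, Finset.sum_congr rfl h2, ← Finset.mul_sum, ← Finset.mul_sum]
    have ih1 := ih f hsub p hp0 hp1
    have gsub : ∀ S T : Finset α,
        f (insert x (S ∪ T)) + f (insert x (S ∩ T)) ≤ f (insert x S) + f (insert x T) := by
      intro S T
      have hu : insert x S ∪ insert x T = insert x (S ∪ T) := by
        ext a; simp only [Finset.mem_insert, Finset.mem_union]; tauto
      have hi : insert x S ∩ insert x T = insert x (S ∩ T) := by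
        ext a; simp only [Finset.mem_insert, Finset.mem_inter]; tauto
      have := hsub (insert x S) (insert x T)
      rwa [hu, hi] at this
    have ih2 := ih (fun S => f (insert x S)) gsub p hp0 hp1
    have hsm := hsub A {x}
    have hAx : A ∩ {x} = ∅ := by
      ext a; simp only [Finset.mem_inter, Finset.mem_singleton, Finset.notMem_empty,
        iff_false, not_and]
      rintro ha rfl; exact hx ha
    have hAu : A ∪ {x} = insert x A := by
      ext a; simp [Finset.mem_union, Finset.mem_insert]
    rw [hAx, hAu] at hsm
    have hxe : ({x} : Finset α) = insert x ∅ := rfl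
    rw [hxe] at hsm
    have h1p : (0:ℝ) ≤ 1 - p := sub_nonneg.mpr hp1
    nlinarith [mul_le_mul_of_nonneg_left ih1 h1p, mul_le_mul_of_nonneg_left ih2 hp0,
      mul_le_mul_of_nonneg_left hsm (mul_nonneg hp0 h1p)]

/-- Lemma 2.3 of Feige–Mirrokni–Vondrák: for a submodular `f` and sets
`A, B`, sampling each element of `A` independently with probability `p` and each element
of `B` independently with probability `q` (all samples mutually independent),
`E[f(A(p) ∪ B(q))] ≥ (1-p)(1-q)f(∅) + p(1-q)f(A) + (1-p)q f(B) + pq f(A ∪ B)`.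
The expectation is written out explicitly as a sum over the possible sampled subsets. -/
theorem stmt_4 {α : Type*} [Fintype α] [DecidableEq α]
    (f : Finset α → ℝ)
    (hsub : ∀ S T : Finset α, f (S ∪ T) + f (S ∩ T) ≤ f S + f T)
    (A B : Finset α) (p q : ℝ)
    (hp : p ∈ Set.Icc (0:ℝ) 1) (hq : q ∈ Set.Icc (0:ℝ) 1) :
    ∑ S ∈ A.powerset, ∑ T ∈ B.powerset,
        (p ^ S.card * (1 - p) ^ (A.card - S.card)) *
          (q ^ T.card * (1 - q) ^ (B.card - T.card)) * f (S ∪ T) ≥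
      (1 - p) * (1 - q) * f ∅ + p * (1 - q) * f A + (1 - p) * q * f B +
        p * q * f (A ∪ B) := by
  obtain ⟨hp0, hp1⟩ := hp
  obtain ⟨hq0, hq1⟩ := hq
  rw [ge_iff_le]
  -- step 1: inner sum bound for each S
  have inner : ∀ S : Finset α,
      (p ^ S.card * (1 - p) ^ (A.card - S.card)) * ((1 - q) * f S + q * f (S ∪ B)) ≤
      ∑ T ∈ B.powerset,
        (p ^ S.card * (1 - p) ^ (A.card - S.card)) *
          (q ^ T.card * (1 - q) ^ (B.card - T.card)) * f (S ∪ T) := by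
    intro S
    have gsub : ∀ T₁ T₂ : Finset α,
        f (S ∪ (T₁ ∪ T₂)) + f (S ∪ (T₁ ∩ T₂)) ≤ f (S ∪ T₁) + f (S ∪ T₂) := by
      intro T₁ T₂
      have hu : (S ∪ T₁) ∪ (S ∪ T₂) = S ∪ (T₁ ∪ T₂) := by
        ext a; simp [Finset.mem_union]; tauto
      have hi : (S ∪ T₁) ∩ (S ∪ T₂) = S ∪ (T₁ ∩ T₂) := by
        ext a; simp [Finset.mem_union, Finset.mem_inter]; tauto
      have := hsub (S ∪ T₁) (S ∪ T₂)
      rwa [hu, hi] at this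
    have hk := key_sampling B (fun T => f (S ∪ T)) gsub q hq0 hq1
    simp only [Finset.union_empty] at hk
    have hw : 0 ≤ p ^ S.card * (1 - p) ^ (A.card - S.card) :=
      mul_nonneg (pow_nonneg hp0 _) (pow_nonneg (sub_nonneg.mpr hp1) _)
    calc (p ^ S.card * (1 - p) ^ (A.card - S.card)) * ((1 - q) * f S + q * f (S ∪ B))
        ≤ (p ^ S.card * (1 - p) ^ (A.card - S.card)) *
            ∑ T ∈ B.powerset, q ^ T.card * (1 - q) ^ (B.card - T.card) * f (S ∪ T) := by
          exact mul_le_mul_of_nonneg_left hk hw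
      _ = ∑ T ∈ B.powerset,
            (p ^ S.card * (1 - p) ^ (A.card - S.card)) *
              (q ^ T.card * (1 - q) ^ (B.card - T.card)) * f (S ∪ T) := by
          rw [Finset.mul_sum]; exact Finset.sum_congr rfl fun T _ => by ring
  have step1 : ∑ S ∈ A.powerset,
      (p ^ S.card * (1 - p) ^ (A.card - S.card)) * ((1 - q) * f S + q * f (S ∪ B)) ≤
      ∑ S ∈ A.powerset, ∑ T ∈ B.powerset,
        (p ^ S.card * (1 - p) ^ (A.card - S.card)) *
          (q ^ T.card * (1 - q) ^ (B.card - T.card)) * f (S ∪ T) :=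
    Finset.sum_le_sum fun S _ => inner S
  refine le_trans ?_ step1
  -- step 2: split the weighted sum
  have hsplit : ∑ S ∈ A.powerset,
      (p ^ S.card * (1 - p) ^ (A.card - S.card)) * ((1 - q) * f S + q * f (S ∪ B))
      = (1 - q) * (∑ S ∈ A.powerset, p ^ S.card * (1 - p) ^ (A.card - S.card) * f S)
        + q * (∑ S ∈ A.powerset, p ^ S.card * (1 - p) ^ (A.card - S.card) * f (S ∪ B)) := by
    rw [Finset.mul_sum, Finset.mul_sum, ← Finset.sum_add_distrib]
    exact Finset.sum_congr rfl fun S _ => by ring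
  rw [hsplit]
  have k1 := key_sampling A f hsub p hp0 hp1
  have hsub2 : ∀ S T : Finset α,
      f ((S ∪ T) ∪ B) + f ((S ∩ T) ∪ B) ≤ f (S ∪ B) + f (T ∪ B) := by
    intro S T
    have hu : (S ∪ B) ∪ (T ∪ B) = (S ∪ T) ∪ B := by
      ext a; simp [Finset.mem_union]; tauto
    have hi : (S ∪ B) ∩ (T ∪ B) = (S ∩ T) ∪ B := by
      ext a; simp [Finset.mem_union, Finset.mem_inter]; tauto
    have := hsub (S ∪ B) (T ∪ B)
    rwa [hu, hi] at this
  have k2 := key_sampling A (fun S => f (S ∪ B)) hsub2 p hp0 hp1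
  simp only [Finset.empty_union] at k2
  have h1q : (0:ℝ) ≤ 1 - q := sub_nonneg.mpr hq1
  nlinarith [mul_le_mul_of_nonneg_left k1 h1q, mul_le_mul_of_nonneg_left k2 hq0]
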